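/- Let k ≥ 1, let p < q be odd primes, n = 2^k·p·q, M = 2^{k+1} - 1, a = σ(n) - 2n. If n is weird then 4 divides a. -/
import Mathlib


/-- Sum of the positive divisors of `n`. -/
def sigma' (n : ℕ) : ℕ := ∑ d ∈ n.divisors, d

/-- `n` is abundant if `σ(n) > 2n`. -/
def Abundant (n : ℕ) : Prop := 2 * n < sigma' n

/-- `n` is pseudoperfect (in the weak sense) if some subset of its proper divisors sums to `n`. -/
def Pseudoperfect (n : ℕ) : Prop := ∃ s ⊆ n.properDivisors, ∑ d ∈ s, d = n

/-- `n` is weird if it is abundant and no subset of its proper divisors sums to `n`. -/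
def Weird (n : ℕ) : Prop := Abundant n ∧ ¬ Pseudoperfect n

theorem weird_abundance_div_four (k p q : ℕ) (hk : 1 ≤ k) (hp : p.Prime) (hq : q.Prime)
    (hop : Odd p) (hoq : Odd q) (hpq : p < q) (hw : Weird (2 ^ k * p * q)) :
    (4 : ℤ) ∣ (sigma' (2 ^ k * p * q) : ℤ) - 2 * (2 ^ k * p * q) := by
  obtain ⟨j, rfl⟩ : ∃ j, k = j + 1 := ⟨k - 1, by omega⟩
  have hcop1 : (2 ^ (j + 1) * p).Coprime q := by
    refine Nat.Coprime.mul ?_ ?_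
    · exact (Nat.coprime_two_left.mpr hoq).pow_left _
    · exact (Nat.coprime_primes hp hq).mpr hpq.ne
  have hcop2 : (2 ^ (j + 1)).Coprime p := (Nat.coprime_two_left.mpr hop).pow_left _
  obtain ⟨s, hs⟩ := hop
  obtain ⟨t, ht⟩ := hoq
  have h1 : sigma' (2 ^ (j + 1) * p * q) =
      sigma' (2 ^ (j + 1)) * sigma' p * sigma' q := by
    unfold sigma'
    rw [Nat.Coprime.sum_divisors_mul hcop1, Nat.Coprime.sum_divisors_mul hcop2]
  have h2 : sigma' (2 ^ (j + 1)) = 2 ^ (j + 2) - 1 := by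
    unfold sigma'
    rw [← ArithmeticFunction.sigma_one_apply,
      ArithmeticFunction.sigma_one_apply_prime_pow Nat.prime_two]
    have : ∀ m : ℕ, ∑ i ∈ Finset.range m, 2 ^ i = 2 ^ m - 1 := by
      intro m
      induction m with
      | zero => simp
      | succ n ih => rw [Finset.sum_range_succ, ih]; have := Nat.one_le_two_pow (n := n); omega
    exact this _
  have h3 : sigma' p = p + 1 := by
    unfold sigma'
    rw [hp.divisors, Finset.sum_pair hp.one_lt.ne]; omega
  have h4 : sigma' q = q + 1 := by
    unfold sigma'
    rw [hq.divisors, Finset.sum_pair hq.one_lt.ne]; omega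
  rw [h1, h2, h3, h4, hs, ht]
  refine ⟨2 ^ j * (2 ^ (j + 2) - 1) - (s - (2 ^ (j + 1) - 1)) * (t - (2 ^ (j + 1) - 1)), ?_⟩
  have h5 : (1:ℕ) ≤ 2 ^ (j + 2) := Nat.one_le_two_pow
  push_cast [h5]
  ring
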